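/- (Iteration complexity) Let P : ℝⁿ → ℝᵐ be continuously differentiable, u⁰ ∈ ℝⁿ, s = ‖P(u⁰)‖_∞ > 0, and let μ, L > 0 and ρ > 0 satisfy: ‖P'(u)ᵀh‖_∞ ≥ μ‖h‖₁ for all h ∈ ℝᵐ and all u ∈ B_ρ = {u : ‖u − u⁰‖₁ ≤ ρ}; ‖(P'(a) − P'(b))v‖_∞ ≤ L‖a−b‖₁‖v‖₁ for all a, b ∈ B_ρ, v ∈ ℝⁿ; and ρ ≥ (μ/L)·(k_max + 2H₀(v̄/2)), where k_max = max{0, ⌈2Ls/μ²⌉ − 2} and v̄ = Ls/μ² − k_max/2; assume in addition v̄ < 1 and 0 < ε < μ²v̄/L. Then every damped sparse-Newton sequence (uᵏ) from u⁰ achieves ‖P(uᵏ)‖_∞ ≤ ε for all k ≥ K_ε, where K_ε = k_max + ⌈log₂(log_{v̄/2}(εL/(2μ²)))⌉. -/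

import Mathlib

open Filter Topology

/-- The ℓ1-norm on `ℝ^d`: `‖x‖₁ = Σᵢ |xᵢ|`. -/
noncomputable def l1Norm {d : ℕ} (x : Fin d → ℝ) : ℝ := ∑ i, |x i|

/-- The ℓ∞-norm on `ℝ^d`: `‖x‖_∞ = maxᵢ |xᵢ|`. -/
noncomputable def linfNorm {d : ℕ} (x : Fin d → ℝ) : ℝ := ⨆ i, |x i|

/-- `H₀(δ) = Σ_{ℓ=0}^∞ δ^(2^ℓ)`. -/
noncomputable def H0 (δ : ℝ) : ℝ := ∑' ℓ : ℕ, δ ^ (2 ^ ℓ)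

/-- The transpose of a continuous linear map `A : ℝⁿ → ℝᵐ` applied to `h ∈ ℝᵐ`:
`(Aᵀ h)ᵢ = Σⱼ Aⱼᵢ hⱼ` where `Aⱼᵢ = (A eᵢ)ⱼ`. -/
noncomputable def transposeApply {n m : ℕ} (A : (Fin n → ℝ) →L[ℝ] (Fin m → ℝ))
    (h : Fin m → ℝ) : Fin n → ℝ :=
  fun i => ∑ j, A (Pi.single i 1) j * h j

lemma l1Norm_nonneg {d : ℕ} (x : Fin d → ℝ) : 0 ≤ l1Norm x :=
  Finset.sum_nonneg fun _ _ => abs_nonneg _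

lemma linfNorm_nonneg {d : ℕ} (x : Fin d → ℝ) : 0 ≤ linfNorm x :=
  Real.iSup_nonneg fun _ => abs_nonneg _

lemma linfNorm_eq_norm {d : ℕ} (x : Fin d → ℝ) : linfNorm x = ‖x‖ := by
  apply le_antisymm
  · exact Real.iSup_le (fun i => by simpa [Real.norm_eq_abs] using norm_le_pi_norm x i)
      (norm_nonneg x)
  · apply pi_norm_le_iff_of_nonneg (linfNorm_nonneg x) |>.2
    intro i
    rw [Real.norm_eq_abs]; exact
      le_ciSup (f := fun i => |x i|) (Set.Finite.bddAbove (Set.finite_range _)) i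

lemma abs_le_linfNorm {d : ℕ} (x : Fin d → ℝ) (i : Fin d) : |x i| ≤ linfNorm x :=
  le_ciSup (f := fun i => |x i|) (Set.Finite.bddAbove (Set.finite_range _)) i

lemma l1Norm_add {d : ℕ} (x y : Fin d → ℝ) : l1Norm (x + y) ≤ l1Norm x + l1Norm y := by
  rw [l1Norm, l1Norm, l1Norm, ← Finset.sum_add_distrib]
  exact Finset.sum_le_sum fun i _ => abs_add_le _ _

lemma l1Norm_smul {d : ℕ} (c : ℝ) (x : Fin d → ℝ) : l1Norm (c • x) = |c| * l1Norm x := by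
  simp [l1Norm, Finset.mul_sum, abs_mul]

lemma l1Norm_neg {d : ℕ} (x : Fin d → ℝ) : l1Norm (-x) = l1Norm x := by
  simp [l1Norm]

lemma l1Norm_zero {d : ℕ} : l1Norm (0 : Fin d → ℝ) = 0 := by simp [l1Norm]

lemma linfNorm_le_l1Norm {d : ℕ} (x : Fin d → ℝ) : linfNorm x ≤ l1Norm x := by
  apply Real.iSup_le _ (l1Norm_nonneg x)
  intro i
  exact Finset.single_le_sum (f := fun j => |x j|) (fun j _ => abs_nonneg _) (Finset.mem_univ i)

lemma linfNorm_pos {d : ℕ} {x : Fin d → ℝ} (h : x ≠ 0) : 0 < linfNorm x := by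
  rw [linfNorm_eq_norm]; exact norm_pos_iff.2 h

lemma holder_l1_linf {d : ℕ} (x y : Fin d → ℝ) : ∑ i, x i * y i ≤ l1Norm x * linfNorm y := by
  calc ∑ i, x i * y i ≤ ∑ i, |x i| * linfNorm y := by
        apply Finset.sum_le_sum
        intro i _
        calc x i * y i ≤ |x i * y i| := le_abs_self _
        _ = |x i| * |y i| := abs_mul _ _
        _ ≤ |x i| * linfNorm y :=
          mul_le_mul_of_nonneg_left (abs_le_linfNorm y i) (abs_nonneg _)
    _ = l1Norm x * linfNorm y := by rw [l1Norm, ← Finset.sum_mul]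

lemma l1Norm_continuous {d : ℕ} : Continuous (fun x : Fin d → ℝ => l1Norm x) := by
  unfold l1Norm
  exact continuous_finset_sum _ fun i _ => (continuous_apply i).abs

lemma pi_repr {d : ℕ} (z : Fin d → ℝ) : z = ∑ j, z j • (Pi.single j 1 : Fin d → ℝ) := by
  funext k
  rw [Finset.sum_apply]
  rw [Finset.sum_eq_single k]
  · simp
  · intro j _ hj; simp [Pi.single_apply, hj.symm]
  · simp

/-- Dual characterization: lower bound on the transpose gives a small-norm solution. -/
lemma exists_solution {n m : ℕ} (A : (Fin n → ℝ) →L[ℝ] (Fin m → ℝ)) (μ : ℝ) (hμ : 0 < μ)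
    (hA : ∀ h : Fin m → ℝ, μ * l1Norm h ≤ linfNorm (transposeApply A h))
    (y : Fin m → ℝ) : ∃ v, A v = y ∧ μ * l1Norm v ≤ linfNorm y := by
  set t : ℝ := linfNorm y / μ with ht
  have ht0 : 0 ≤ t := div_nonneg (linfNorm_nonneg y) hμ.le
  have hty : linfNorm y = μ * t := by rw [ht]; field_simp
  set S : Set (Fin n → ℝ) := {v | l1Norm v ≤ t} with hS
  have h0S : (0 : Fin n → ℝ) ∈ S := by
    simp only [hS, Set.mem_setOf_eq, l1Norm_zero]; exact ht0
  have hconv : Convex ℝ S := by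
    intro a ha b hb p q hp hq hpq
    simp only [hS, Set.mem_setOf_eq] at *
    calc l1Norm (p • a + q • b) ≤ l1Norm (p • a) + l1Norm (q • b) := l1Norm_add _ _
      _ = p * l1Norm a + q * l1Norm b := by
          rw [l1Norm_smul, l1Norm_smul, abs_of_nonneg hp, abs_of_nonneg hq]
      _ ≤ p * t + q * t := by gcongr
      _ = t := by rw [← add_mul, hpq, one_mul]
  have hScompact : IsCompact S := by
    have hclosed : IsClosed S := isClosed_le l1Norm_continuous continuous_const
    apply Metric.isCompact_of_isClosed_isBounded hclosed
    rw [Metric.isBounded_iff_subset_closedBall 0]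
    refine ⟨t, fun v hv => ?_⟩
    simp only [Metric.mem_closedBall, dist_zero_right]
    calc ‖v‖ = linfNorm v := (linfNorm_eq_norm v).symm
      _ ≤ l1Norm v := linfNorm_le_l1Norm v
      _ ≤ t := hv
  have hKconv : Convex ℝ (A '' S) := hconv.is_linear_image ⟨A.map_add, A.map_smul⟩
  have hKclosed : IsClosed (A '' S) := (hScompact.image A.continuous).isClosed
  by_contra hcon
  push_neg at hcon
  have hy : y ∉ A '' S := by
    rintro ⟨v, hv, rfl⟩
    have hv' : l1Norm v ≤ t := hv
    have h1 : μ * l1Norm v ≤ μ * t := mul_le_mul_of_nonneg_left hv' hμ.le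
    rw [← hty] at h1
    exact absurd (hcon v rfl) (not_lt.2 h1)
  obtain ⟨f, c, hfS, hfy⟩ := geometric_hahn_banach_closed_point hKconv hKclosed hy
  set h : Fin m → ℝ := fun j => f (Pi.single j 1) with hh
  have hf_repr : ∀ z : Fin m → ℝ, f z = ∑ j, z j * h j := by
    intro z
    conv_lhs => rw [pi_repr z]
    rw [map_sum]
    congr 1; funext j
    rw [map_smul]; simp [hh, smul_eq_mul]
  have hfA : ∀ v : Fin n → ℝ, f (A v) = ∑ i, v i * transposeApply A h i := by
    intro v
    conv_lhs => rw [pi_repr v]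
    rw [map_sum, map_sum]
    congr 1; funext i
    rw [map_smul, map_smul, smul_eq_mul, hf_repr]
    simp [transposeApply, Finset.mul_sum]
  have hy0 : y ≠ 0 := by
    rintro rfl
    exact hy ⟨0, h0S, map_zero A⟩
  have htpos : 0 < t := by
    rcases ht0.lt_or_eq with hlt | heq
    · exact hlt
    · exfalso
      have : linfNorm y = 0 := by rw [hty, ← heq, mul_zero]
      exact hy0 (by rw [linfNorm_eq_norm] at this; exact norm_eq_zero.1 this)
  have hcpos : 0 < c := by
    have := hfS _ ⟨0, h0S, map_zero A⟩
    rwa [map_zero] at this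
  have hkey : ∀ i : Fin n, t * |transposeApply A h i| < c := by
    intro i
    set σ : ℝ := if 0 ≤ transposeApply A h i then 1 else -1 with hσ
    have habssig : |t * σ| = t := by
      rcases le_or_gt 0 (transposeApply A h i) with hc | hc <;>
        simp [hσ, hc, abs_mul, abs_of_nonneg ht0, not_le.2]
    have hv : ((t * σ) • (Pi.single i 1 : Fin n → ℝ)) ∈ S := by
      have h1 : l1Norm (Pi.single i (1:ℝ)) = 1 := by
        unfold l1Norm
        rw [Finset.sum_eq_single i]
        · simp
        · intro j _ hj; simp [Pi.single_apply, hj]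
        · simp
      have : l1Norm ((t * σ) • (Pi.single i 1 : Fin n → ℝ)) = t := by
        rw [l1Norm_smul, h1, mul_one, habssig]
      simp only [hS, Set.mem_setOf_eq, this, le_refl]
    have hlt := hfS _ ⟨_, hv, rfl⟩
    rw [map_smul, map_smul, smul_eq_mul, hfA] at hlt
    have hsum : ∑ j, (Pi.single i 1 : Fin n → ℝ) j * transposeApply A h j
        = transposeApply A h i := by
      rw [Finset.sum_eq_single i]
      · simp
      · intro j _ hj; simp [Pi.single_apply, hj]
      · simp
    rw [hsum] at hlt
    have h2 : t * (σ * transposeApply A h i) < c := by linarith [hlt]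
    have habs : σ * transposeApply A h i = |transposeApply A h i| := by
      rcases le_or_gt 0 (transposeApply A h i) with hc | hc
      · simp [hσ, hc, abs_of_nonneg hc]
      · simp [hσ, not_le.2 hc, abs_of_neg hc]
    rwa [habs] at h2
  have hlin : linfNorm (transposeApply A h) ≤ c / t := by
    apply Real.iSup_le _ (div_nonneg hcpos.le ht0)
    intro i
    rw [le_div_iff₀ htpos, mul_comm]
    exact (hkey i).le
  have hμh : μ * l1Norm h ≤ c / t := le_trans (hA h) hlin
  have hfyle : f y ≤ c := by
    rw [hf_repr]
    calc ∑ j, y j * h j = ∑ j, h j * y j := by congr 1; funext j; ring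
      _ ≤ l1Norm h * linfNorm y := holder_l1_linf h y
      _ = (μ * l1Norm h) * t := by rw [hty]; ring
      _ ≤ (c / t) * t := mul_le_mul_of_nonneg_right hμh ht0
      _ = c := by field_simp
  exact absurd hfy (not_lt.2 hfyle)

/-- Taylor / descent-lemma bound along a segment where the derivative is Lipschitz. -/
lemma taylor_bound {n m : ℕ} (P : (Fin n → ℝ) → (Fin m → ℝ)) (hP : ContDiff ℝ 1 P)
    (L : ℝ) (hL : 0 ≤ L) (S : Set (Fin n → ℝ))
    (hLip : ∀ a ∈ S, ∀ b ∈ S, ∀ v : Fin n → ℝ,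
      linfNorm ((fderiv ℝ P a - fderiv ℝ P b) v) ≤ L * l1Norm (a - b) * l1Norm v)
    (a dd : Fin n → ℝ) (hseg : ∀ t : ℝ, t ∈ Set.Icc (0:ℝ) 1 → a + t • dd ∈ S) :
    linfNorm (P (a + dd) - P a - fderiv ℝ P a dd) ≤ L / 2 * (l1Norm dd) ^ 2 := by
  have hdiff : Differentiable ℝ P := hP.differentiable one_ne_zero
  set G : ℝ → (Fin m → ℝ) := fun t => P (a + t • dd) - t • (fderiv ℝ P a dd) with hG
  set g' : ℝ → (Fin m → ℝ) :=
    fun t => fderiv ℝ P (a + t • dd) dd - fderiv ℝ P a dd with hg'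
  have hGderiv : ∀ t : ℝ, HasDerivAt G (g' t) t := by
    intro t
    have h1 : HasDerivAt (fun t : ℝ => a + t • dd) dd t := by
      simpa using ((hasDerivAt_id t).smul_const dd).const_add a
    have h2 : HasDerivAt (fun t : ℝ => P (a + t • dd)) (fderiv ℝ P (a + t • dd) dd) t :=
      (hdiff (a + t • dd)).hasFDerivAt.comp_hasDerivAt t h1
    have h3 : HasDerivAt (fun t : ℝ => t • (fderiv ℝ P a dd)) (fderiv ℝ P a dd) t := by
      simpa using (hasDerivAt_id t).smul_const (fderiv ℝ P a dd)
    exact h2.sub h3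
  have hg'cont : Continuous g' := by
    apply Continuous.sub _ continuous_const
    apply Continuous.clm_apply _ continuous_const
    exact (hP.continuous_fderiv one_ne_zero).comp (by continuity)
  have hFTC : ∫ t in (0:ℝ)..1, g' t = G 1 - G 0 :=
    intervalIntegral.integral_eq_sub_of_hasDerivAt (fun t _ => hGderiv t)
      (hg'cont.intervalIntegrable 0 1)
  have hG10 : G 1 - G 0 = P (a + dd) - P a - fderiv ℝ P a dd := by
    simp [hG, one_smul]
    abel
  have hbound : ∀ t ∈ Set.Ioc (0:ℝ) 1, ‖g' t‖ ≤ (L * (l1Norm dd) ^ 2) * t := by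
    intro t ht
    have ht' : t ∈ Set.Icc (0:ℝ) 1 := ⟨ht.1.le, ht.2⟩
    have hmem : a + t • dd ∈ S := hseg t ht'
    have hmem0 : a ∈ S := by simpa using hseg 0 ⟨le_refl 0, zero_le_one⟩
    have hl := hLip _ hmem _ hmem0 dd
    rw [ContinuousLinearMap.sub_apply] at hl
    have hsub : a + t • dd - a = t • dd := by abel
    rw [hsub, l1Norm_smul, abs_of_nonneg ht.1.le] at hl
    calc ‖g' t‖ = linfNorm (fderiv ℝ P (a + t • dd) dd - fderiv ℝ P a dd) :=
          (linfNorm_eq_norm _).symm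
      _ ≤ L * (t * l1Norm dd) * l1Norm dd := hl
      _ = (L * (l1Norm dd) ^ 2) * t := by ring
  have hnorm : ‖∫ t in (0:ℝ)..1, g' t‖ ≤ |∫ t in (0:ℝ)..1, (L * (l1Norm dd) ^ 2) * t| := by
    apply intervalIntegral.norm_integral_le_abs_of_norm_le
    · rw [Set.uIoc_of_le (zero_le_one)]
      filter_upwards [MeasureTheory.ae_restrict_mem measurableSet_Ioc] with t ht
      exact hbound t ht
    · exact (continuous_const.mul continuous_id).intervalIntegrable 0 1
  have hint : ∫ t in (0:ℝ)..1, (L * (l1Norm dd) ^ 2) * t = L * (l1Norm dd) ^ 2 / 2 := by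
    rw [intervalIntegral.integral_const_mul]
    simp [integral_id]
    ring
  rw [hint] at hnorm
  rw [hFTC, hG10] at hnorm
  rw [linfNorm_eq_norm]
  calc ‖P (a + dd) - P a - (fderiv ℝ P a) dd‖ ≤ |L * l1Norm dd ^ 2 / 2| := hnorm
    _ = L / 2 * (l1Norm dd) ^ 2 := by
        rw [abs_of_nonneg (div_nonneg (mul_nonneg hL (sq_nonneg _)) two_pos.le)]
        ring
set_option maxHeartbeats 1000000 in
/-- iteration complexity: under the hypotheses guaranteeing
convergence of the damped sparse-Newton method, together with `v̄ < 1` and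
`0 < ε < μ²v̄/L`, every damped sparse-Newton sequence from `u⁰` achieves
`‖P(uᵏ)‖_∞ ≤ ε` for all `k ≥ K_ε`, where
`K_ε = k_max + ⌈log₂(log_{v̄/2}(εL/(2μ²)))⌉`. -/
theorem statement13 {n m : ℕ} (P : (Fin n → ℝ) → (Fin m → ℝ)) (hP : ContDiff ℝ 1 P)
    (u0 : Fin n → ℝ) (s : ℝ) (hs : s = linfNorm (P u0)) (hspos : 0 < s)
    (ρ : ℝ) (hρ : 0 < ρ) (Bρ : Set (Fin n → ℝ)) (hB : Bρ = {v | l1Norm (v - u0) ≤ ρ})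
    (μ : ℝ) (hμ : 0 < μ)
    (hA' : ∀ v ∈ Bρ, ∀ h : Fin m → ℝ,
      μ * l1Norm h ≤ linfNorm (transposeApply (fderiv ℝ P v) h))
    (L : ℝ) (hL : 0 < L)
    (hLip : ∀ a ∈ Bρ, ∀ b ∈ Bρ, ∀ v : Fin n → ℝ,
      linfNorm ((fderiv ℝ P a - fderiv ℝ P b) v) ≤ L * l1Norm (a - b) * l1Norm v)
    (kmax : ℤ) (hkmax : kmax = max 0 (⌈2 * (L * s / μ ^ 2)⌉ - 2))
    (vbar : ℝ) (hvbar : vbar = L * s / μ ^ 2 - (kmax : ℝ) / 2)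
    (hρbig : ρ ≥ μ / L * ((kmax : ℝ) + 2 * H0 (vbar / 2)))
    (hvbar1 : vbar < 1) (ε : ℝ) (hε : 0 < ε) (hεsmall : ε < μ ^ 2 * vbar / L)
    (Kε : ℤ)
    (hKε : Kε = kmax + ⌈Real.logb 2 (Real.logb (vbar / 2) (ε * L / (2 * μ ^ 2)))⌉)
    -- a damped sparse-Newton sequence from `u0`:
    (u w : ℕ → Fin n → ℝ) (γ : ℕ → ℝ) (hu0 : u 0 = u0)
    (hw_eq : ∀ k, fderiv ℝ P (u k) (w k) = P (u k))
    (hw_min : ∀ k, ∀ v : Fin n → ℝ, fderiv ℝ P (u k) v = P (u k) →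
      l1Norm (w k) ≤ l1Norm v)
    (hγ : ∀ k, γ k = if P (u k) = 0 then 1
      else min 1 (μ ^ 2 / (L * linfNorm (P (u k)))))
    (hstep : ∀ k, u (k + 1) = u k - γ k • w k) :
    ∀ k : ℕ, Kε ≤ (k : ℤ) → linfNorm (P (u k)) ≤ ε := by
  have hμ2 : (0:ℝ) < μ ^ 2 := by positivity
  set τ : ℝ := μ ^ 2 / L with hτ
  have hτpos : 0 < τ := by positivity
  set c0 : ℝ := L * s / μ ^ 2 with hc0
  have hc0pos : 0 < c0 := by positivity
  have hsτ : s = τ * c0 := by rw [hτ, hc0]; field_simp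
  have hvbar0 : 0 < vbar := by
    by_contra hv
    push_neg at hv
    have : μ ^ 2 * vbar / L ≤ 0 := by
      apply div_nonpos_of_nonpos_of_nonneg _ hL.le
      exact mul_nonpos_of_nonneg_of_nonpos hμ2.le hv
    linarith
  set δ : ℝ := vbar / 2 with hδdef
  have hδ0 : 0 < δ := by rw [hδdef]; positivity
  have hδ1 : δ < 1 := by rw [hδdef]; linarith
  have hkmax0 : 0 ≤ kmax := by rw [hkmax]; exact le_max_left _ _
  set K : ℕ := kmax.toNat with hKdef
  have hKcast : (K : ℝ) = (kmax : ℝ) := by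
    rw [hKdef]
    exact_mod_cast congrArg (Int.cast : ℤ → ℝ) (Int.toNat_of_nonneg hkmax0)
  have hvc : vbar = c0 - (K : ℝ) / 2 := by rw [hvbar, hKcast, hc0]
  have hhalf : 1 ≤ K → 1 / 2 ≤ vbar := by
    intro h1
    have h1' : (1:ℤ) ≤ kmax := by rw [hKdef] at h1; omega
    have hkm : kmax = ⌈2 * c0⌉ - 2 := by omega
    have hceil : ((⌈2 * c0⌉ : ℤ) : ℝ) < 2 * c0 + 1 := Int.ceil_lt_add_one _
    have hcast : (kmax : ℝ) = ((⌈2 * c0⌉ : ℤ) : ℝ) - 2 := by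
      rw [hkm]; push_cast; ring
    have hKr : (K : ℝ) = (kmax : ℝ) := hKcast
    rw [hvc, hKr, hcast]
    linarith
  -- the decreasing envelope `dseq` and step-length budget `bseq`
  set dseq : ℕ → ℝ := fun k => if k < K then c0 - k / 2 else 2 * δ ^ (2 ^ (k - K)) with hd
  set bseq : ℕ → ℝ := fun k => if k < K then μ / L else (2 * μ / L) * δ ^ (2 ^ (k - K)) with hb
  have hdK : ∀ j, j ≤ K → dseq j = c0 - j / 2 := by
    intro j hj
    rcases lt_or_eq_of_le hj with hlt | heq
    · simp [hd, hlt]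
    · subst heq
      have : dseq K = 2 * δ ^ (2 ^ (K - K)) := by
        simp only [hd]
        rw [if_neg (lt_irrefl K)]
      rw [this, Nat.sub_self, pow_zero, pow_one,
        show (2:ℝ) * δ = vbar by rw [hδdef]; ring, hvc]
  have hvbar_le : ∀ j : ℕ, j ≤ K → vbar ≤ c0 - (j:ℝ) / 2 := by
    intro j hj
    rw [hvc]
    have : (j : ℝ) ≤ (K : ℝ) := by exact_mod_cast hj
    linarith
  have hdpos : ∀ j, 0 < dseq j := by
    intro j
    by_cases hj : j < K
    · simp only [hd, if_pos hj]
      exact lt_of_lt_of_le hvbar0 (hvbar_le j hj.le)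
    · simp only [hd, if_neg hj]
      positivity
  have hdquad : ∀ j, K ≤ j → dseq j = 2 * δ ^ (2 ^ (j - K)) := by
    intro j hj
    simp only [hd]
    rw [if_neg (Nat.not_lt.2 hj)]
  have hδpow_le : ∀ e : ℕ, δ ^ (2 ^ e) ≤ δ := by
    intro e
    calc δ ^ (2 ^ e) ≤ δ ^ 1 :=
          pow_le_pow_of_le_one hδ0.le hδ1.le Nat.one_le_two_pow
      _ = δ := pow_one δ
  have hdle_vbar : ∀ j, K ≤ j → dseq j ≤ vbar := by
    intro j hj
    rw [hdquad j hj]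
    have := hδpow_le (j - K)
    rw [hδdef] at *
    linarith
  -- summability and partial sums of H0
  have hsummable : Summable (fun ℓ : ℕ => δ ^ (2 ^ ℓ)) := by
    apply Summable.of_nonneg_of_le (fun ℓ => pow_nonneg hδ0.le _)
      (fun ℓ => pow_le_pow_of_le_one hδ0.le hδ1.le (Nat.lt_two_pow_self (n := ℓ)).le)
    exact summable_geometric_of_lt_one hδ0.le hδ1
  have hH0part : ∀ k : ℕ, ∑ ℓ ∈ Finset.range k, δ ^ (2 ^ ℓ) ≤ H0 δ := by
    intro k
    rw [H0]
    exact Summable.sum_le_tsum (Finset.range k) (fun ℓ _ => pow_nonneg hδ0.le _) hsummable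
  have hH0nonneg : 0 ≤ H0 δ := le_trans (by simp) (hH0part 0)
  set Bsum : ℕ → ℝ := fun k =>
    μ / L * (min k K : ℕ) + (2 * μ / L) * ∑ ℓ ∈ Finset.range (k - K), δ ^ (2 ^ ℓ) with hBs
  have hBsum_succ : ∀ k, Bsum (k + 1) = Bsum k + bseq k := by
    intro k
    by_cases hk : k < K
    · have h1 : min (k + 1) K = k + 1 := min_eq_left (by omega)
      have h2 : min k K = k := min_eq_left (by omega)
      have h3 : k + 1 - K = 0 := by omega
      have h4 : k - K = 0 := by omega
      simp only [hBs, hb, if_pos hk, h1, h2, h3, h4]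
      push_cast
      ring
    · have h1 : min (k + 1) K = K := min_eq_right (by omega)
      have h2 : min k K = K := min_eq_right (by omega)
      have h3 : k + 1 - K = (k - K) + 1 := by omega
      simp only [hBs, hb, if_neg hk, h1, h2, h3, Finset.sum_range_succ]
      ring
  have hBsum_le : ∀ k, Bsum k ≤ ρ := by
    intro k
    have hminK : ((min k K : ℕ) : ℝ) ≤ (K : ℝ) := by
      exact_mod_cast Nat.cast_le.2 (min_le_right k K)
    have h1 : Bsum k ≤ μ / L * K + (2 * μ / L) * H0 δ := by
      apply add_le_add
      · exact mul_le_mul_of_nonneg_left hminK (by positivity)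
      · exact mul_le_mul_of_nonneg_left (hH0part _) (by positivity)
    calc Bsum k ≤ μ / L * K + (2 * μ / L) * H0 δ := h1
      _ = μ / L * ((kmax : ℝ) + 2 * H0 δ) := by rw [← hKcast]; ring
      _ ≤ ρ := hρbig
  -- the main invariant
  have main : ∀ k : ℕ, l1Norm (u k - u0) ≤ Bsum k ∧ linfNorm (P (u k)) ≤ τ * dseq k := by
    intro k
    induction k with
    | zero =>
        constructor
        · rw [hu0, sub_self, l1Norm_zero, hBs]
          simp
        · have hd0 : dseq 0 = c0 := by
            have := hdK 0 (Nat.zero_le K)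
            simpa using this
          rw [hd0, ← hsτ, hu0, ← hs]
    | succ k ih =>
        obtain ⟨ih1, ih2⟩ := ih
        have humem : u k ∈ Bρ := by
          rw [hB]; exact le_trans ih1 (hBsum_le k)
        have hwb : μ * l1Norm (w k) ≤ linfNorm (P (u k)) := by
          obtain ⟨v, hv1, hv2⟩ :=
            exists_solution (fderiv ℝ P (u k)) μ hμ (hA' _ humem) (P (u k))
          exact le_trans (mul_le_mul_of_nonneg_left (hw_min k v hv1) hμ.le) hv2
        set r : ℝ := linfNorm (P (u k)) with hr
        have hr0 : 0 ≤ r := linfNorm_nonneg _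
        have hγ0 : 0 ≤ γ k := by
          rw [hγ k]
          split
          · norm_num
          · exact le_min zero_le_one (by positivity)
        have hγle1 : γ k ≤ 1 := by
          rw [hγ k]; split
          · exact le_rfl
          · exact min_le_left _ _
        have hγr : γ k * r = min r τ := by
          rcases eq_or_ne (P (u k)) 0 with h0 | h0
          · have hr' : r = 0 := by
              rw [hr, h0, linfNorm_eq_norm, norm_zero]
            rw [hγ k, if_pos h0, hr', mul_zero, min_eq_left hτpos.le]
          · have hrpos : 0 < r := linfNorm_pos h0
            rw [hγ k, if_neg h0]
            have hq : μ ^ 2 / (L * r) = τ / r := by rw [hτ, div_div]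
            rw [hq]
            rcases le_total (τ / r) 1 with hc | hc
            · rw [min_eq_right hc, div_mul_cancel₀ _ hrpos.ne']
              rw [min_eq_right ((div_le_one hrpos).1 hc)]
            · rw [min_eq_left hc, one_mul, min_eq_left ((one_le_div hrpos).1 hc)]
        have hγl1 : γ k * l1Norm (w k) ≤ min r τ / μ := by
          have hl1w : l1Norm (w k) ≤ r / μ := by
            rw [le_div_iff₀ hμ]
            linarith [hwb]
          calc γ k * l1Norm (w k) ≤ γ k * (r / μ) :=
                mul_le_mul_of_nonneg_left hl1w hγ0
            _ = (γ k * r) / μ := by ring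
            _ = min r τ / μ := by rw [hγr]
        have hbk : min r τ / μ ≤ bseq k := by
          by_cases hkK : k < K
          · simp only [hb, if_pos hkK]
            have : min r τ ≤ τ := min_le_right _ _
            calc min r τ / μ ≤ τ / μ := by gcongr
              _ = μ / L := by rw [hτ]; field_simp
          · simp only [hb, if_neg hkK]
            have hdq : dseq k = 2 * δ ^ (2 ^ (k - K)) := hdquad k (Nat.not_lt.1 hkK)
            calc min r τ / μ ≤ r / μ := by gcongr; exact min_le_left _ _
              _ ≤ τ * (2 * δ ^ (2 ^ (k - K))) / μ := by
                  gcongr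
                  rw [← hdq]; exact ih2
              _ = (2 * μ / L) * δ ^ (2 ^ (k - K)) := by rw [hτ]; field_simp
        have hγlb : γ k * l1Norm (w k) ≤ bseq k := le_trans hγl1 hbk
        have hbk0 : 0 ≤ bseq k :=
          le_trans (mul_nonneg hγ0 (l1Norm_nonneg _)) hγlb
        -- step-length bound (S1)
        have hS1 : l1Norm (u (k + 1) - u0) ≤ Bsum (k + 1) := by
          rw [hstep k]
          have he : u k - γ k • w k - u0 = (u k - u0) + (-(γ k • w k)) := by abel
          rw [he]
          calc l1Norm ((u k - u0) + (-(γ k • w k)))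
              ≤ l1Norm (u k - u0) + l1Norm (-(γ k • w k)) := l1Norm_add _ _
            _ = l1Norm (u k - u0) + γ k * l1Norm (w k) := by
                rw [l1Norm_neg, l1Norm_smul, abs_of_nonneg hγ0]
            _ ≤ Bsum k + bseq k := add_le_add ih1 hγlb
            _ = Bsum (k + 1) := (hBsum_succ k).symm
        -- segment stays in Bρ
        have hseg : ∀ t : ℝ, t ∈ Set.Icc (0:ℝ) 1 → u k + t • (-(γ k • w k)) ∈ Bρ := by
          intro t ht
          rw [hB]
          show l1Norm (u k + t • (-(γ k • w k)) - u0) ≤ ρ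
          have he : u k + t • (-(γ k • w k)) - u0 = (u k - u0) + (-((t * γ k) • w k)) := by
            rw [smul_neg, smul_smul]
            abel
          rw [he]
          calc l1Norm ((u k - u0) + (-((t * γ k) • w k)))
              ≤ l1Norm (u k - u0) + l1Norm (-((t * γ k) • w k)) := l1Norm_add _ _
            _ = l1Norm (u k - u0) + (t * γ k) * l1Norm (w k) := by
                rw [l1Norm_neg, l1Norm_smul,
                  abs_of_nonneg (mul_nonneg ht.1 hγ0)]
            _ ≤ Bsum k + γ k * l1Norm (w k) := by
                apply add_le_add ih1
                apply mul_le_mul_of_nonneg_right _ (l1Norm_nonneg _)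
                nlinarith [ht.2, hγ0]
            _ ≤ Bsum k + bseq k := add_le_add le_rfl hγlb
            _ = Bsum (k + 1) := (hBsum_succ k).symm
            _ ≤ ρ := hBsum_le _
        have htay := taylor_bound P hP L hL.le Bρ hLip (u k) (-(γ k • w k)) hseg
        have hfd : fderiv ℝ P (u k) (-(γ k • w k)) = -(γ k • P (u k)) := by
          rw [map_neg, map_smul, hw_eq k]
        have hukk : u k + -(γ k • w k) = u (k + 1) := by
          rw [hstep k, sub_eq_add_neg]
        have key : linfNorm (P (u (k + 1)) - (1 - γ k) • P (u k))
            ≤ L / 2 * (γ k * l1Norm (w k)) ^ 2 := by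
          have e1 : P (u (k + 1)) - (1 - γ k) • P (u k)
              = P (u k + -(γ k • w k)) - P (u k) - fderiv ℝ P (u k) (-(γ k • w k)) := by
            rw [hfd, sub_smul, one_smul, hukk]
            abel
          rw [e1]
          calc linfNorm (P (u k + -(γ k • w k)) - P (u k) - fderiv ℝ P (u k) (-(γ k • w k)))
              ≤ L / 2 * (l1Norm (-(γ k • w k))) ^ 2 := htay
            _ = L / 2 * (γ k * l1Norm (w k)) ^ 2 := by
                rw [l1Norm_neg, l1Norm_smul, abs_of_nonneg hγ0]
        -- the recursion
        have hrs : linfNorm (P (u (k + 1)))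
            ≤ (1 - γ k) * r + L / 2 * (γ k * l1Norm (w k)) ^ 2 := by
          calc linfNorm (P (u (k + 1))) = ‖P (u (k + 1))‖ := linfNorm_eq_norm _
            _ = ‖(P (u (k + 1)) - (1 - γ k) • P (u k)) + (1 - γ k) • P (u k)‖ := by
                rw [sub_add_cancel]
            _ ≤ ‖P (u (k + 1)) - (1 - γ k) • P (u k)‖ + ‖(1 - γ k) • P (u k)‖ :=
                norm_add_le _ _
            _ ≤ L / 2 * (γ k * l1Norm (w k)) ^ 2 + (1 - γ k) * r := by
                apply add_le_add
                · rw [← linfNorm_eq_norm]; exact key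
                · rw [norm_smul, Real.norm_eq_abs, abs_of_nonneg (by linarith), hr,
                    linfNorm_eq_norm]
            _ = (1 - γ k) * r + L / 2 * (γ k * l1Norm (w k)) ^ 2 := by ring
        have hquad : L / 2 * (γ k * l1Norm (w k)) ^ 2 ≤ (min r τ) ^ 2 / (2 * τ) := by
          have hx0 : 0 ≤ γ k * l1Norm (w k) := mul_nonneg hγ0 (l1Norm_nonneg _)
          have h1 : (γ k * l1Norm (w k)) ^ 2 ≤ (min r τ / μ) ^ 2 := by
            apply pow_le_pow_left₀ hx0 hγl1
          calc L / 2 * (γ k * l1Norm (w k)) ^ 2 ≤ L / 2 * (min r τ / μ) ^ 2 := by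
                apply mul_le_mul_of_nonneg_left h1 (by positivity)
            _ = (min r τ) ^ 2 / (2 * τ) := by
                rw [hτ, div_pow, eq_div_iff (by positivity)]
                field_simp
        have hrec : linfNorm (P (u (k + 1))) ≤ r - min r τ + (min r τ) ^ 2 / (2 * τ) := by
          have h1 : (1 - γ k) * r = r - min r τ := by rw [← hγr]; ring
          linarith [hrs, hquad]
        have hm0 : 0 ≤ min r τ := le_min hr0 hτpos.le
        have hmτ : min r τ ≤ τ := min_le_right _ _
        have fact2 : r ≤ τ → linfNorm (P (u (k + 1))) ≤ r ^ 2 / (2 * τ) := by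
          intro hcase
          rw [min_eq_left hcase] at hrec
          linarith
        have fact1 : linfNorm (P (u (k + 1))) ≤ r - min r τ / 2 := by
          have h1 : (min r τ) ^ 2 / (2 * τ) ≤ min r τ / 2 := by
            rw [div_le_div_iff₀ (by positivity) (by norm_num)]
            nlinarith
          linarith
        -- the envelope bound (S2)
        have hS2 : linfNorm (P (u (k + 1))) ≤ τ * dseq (k + 1) := by
          by_cases hkK : k < K
          · have hdk : dseq k = c0 - k / 2 := by simp [hd, hkK]
            have hdk1 : dseq (k + 1) = c0 - (k + 1 : ℕ) / 2 := hdK (k + 1) (by omega)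
            rw [hdk] at ih2
            by_cases hrτ : τ < r
            · rw [min_eq_right hrτ.le] at fact1
              rw [hdk1]
              push_cast
              have : τ * (c0 - ((k:ℝ) + 1) / 2) = τ * (c0 - (k:ℝ) / 2) - τ / 2 := by ring
              rw [this]
              linarith only [fact1, ih2, hτpos]
            · have h2 := fact2 (not_lt.1 hrτ)
              have hvhalf : 1 / 2 ≤ vbar := hhalf (by omega)
              have h3 : r ^ 2 / (2 * τ) ≤ τ / 2 := by
                rw [div_le_div_iff₀ (by positivity) (by norm_num)]
                have hsq : r ^ 2 ≤ τ ^ 2 := pow_le_pow_left₀ hr0 (not_lt.1 hrτ) 2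
                calc r ^ 2 * 2 ≤ τ ^ 2 * 2 := by linarith only [hsq]
                  _ = τ * (2 * τ) := by ring
              have h4 : vbar ≤ c0 - ((k:ℕ) + 1 : ℕ) / 2 := hvbar_le (k + 1) (by omega)
              rw [hdk1]
              have h5 : τ / 2 ≤ τ * vbar := by
                calc τ / 2 = τ * (1 / 2) := by ring
                  _ ≤ τ * vbar := mul_le_mul_of_nonneg_left hvhalf hτpos.le
              have h6 : τ * vbar ≤ τ * (c0 - ((k + 1 : ℕ) : ℝ) / 2) := by
                apply mul_le_mul_of_nonneg_left _ hτpos.le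
                exact_mod_cast h4
              linarith only [h2, h3, h5, h6]
          · have hKk : K ≤ k := Nat.not_lt.1 hkK
            have hdk : dseq k = 2 * δ ^ (2 ^ (k - K)) := hdquad k hKk
            have hdk1 : dseq (k + 1) = 2 * δ ^ (2 ^ (k + 1 - K)) := hdquad (k + 1) (by omega)
            rw [hdk] at ih2
            have hrτ' : r ≤ τ := by
              have h2d : (2:ℝ) * δ = vbar := by rw [hδdef]; ring
              calc r ≤ τ * (2 * δ ^ (2 ^ (k - K))) := ih2
                _ ≤ τ * (2 * δ) := by
                    have := hδpow_le (k - K)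
                    gcongr
                _ = τ * vbar := by rw [h2d]
                _ ≤ τ * 1 := mul_le_mul_of_nonneg_left hvbar1.le hτpos.le
                _ = τ := mul_one τ
            have h2 := fact2 hrτ'
            have hexp : 2 ^ (k + 1 - K) = 2 ^ (k - K) * 2 := by
              rw [show k + 1 - K = (k - K) + 1 by omega, pow_succ]
            have h3 : r ^ 2 ≤ (τ * (2 * δ ^ (2 ^ (k - K)))) ^ 2 := by
              apply pow_le_pow_left₀ hr0 ih2
            have h4 : (τ * (2 * δ ^ (2 ^ (k - K)))) ^ 2 / (2 * τ)
                = τ * (2 * δ ^ (2 ^ (k + 1 - K))) := by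
              rw [hexp, pow_mul]
              field_simp
            rw [hdk1, ← h4]
            calc linfNorm (P (u (k + 1))) ≤ r ^ 2 / (2 * τ) := h2
              _ ≤ (τ * (2 * δ ^ (2 ^ (k - K)))) ^ 2 / (2 * τ) := by gcongr
        exact ⟨hS1, hS2⟩
  -- conclusion
  intro k hk
  set x : ℝ := ε * L / (2 * μ ^ 2) with hx
  have hx0 : 0 < x := by positivity
  have hxδ : x < δ := by
    rw [hx, hδdef]
    rw [div_lt_div_iff₀ (by positivity) (by norm_num)]
    have hεL : ε * L < μ ^ 2 * vbar := (lt_div_iff₀ hL).1 hεsmall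
    linarith
  have hlogδ : Real.log δ < 0 := Real.log_neg hδ0 hδ1
  have hA0 : 1 < Real.logb δ x := by
    rw [Real.logb, lt_div_iff_of_neg hlogδ, one_mul]
    exact Real.log_lt_log hx0 hxδ
  set N : ℤ := ⌈Real.logb 2 (Real.logb δ x)⌉ with hN
  have hN1 : 1 ≤ N := by
    rw [hN]
    have : 0 < Real.logb 2 (Real.logb δ x) := Real.logb_pos one_lt_two hA0
    exact Int.ceil_pos.2 this
  set NT : ℕ := N.toNat with hNT
  have hNTN : (NT : ℤ) = N := Int.toNat_of_nonneg (by omega)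
  have hNTr : Real.logb 2 (Real.logb δ x) ≤ (NT : ℝ) := by
    have := Int.le_ceil (Real.logb 2 (Real.logb δ x))
    rw [← hN] at this
    calc Real.logb 2 (Real.logb δ x) ≤ (N : ℝ) := this
      _ = (NT : ℝ) := by exact_mod_cast hNTN.symm
  have hpow : δ ^ (2 ^ NT) ≤ x := by
    have hA0pos : 0 < Real.logb δ x := by linarith
    have h2N : Real.logb δ x ≤ ((2 ^ NT : ℕ) : ℝ) := by
      have : ((2 ^ NT : ℕ) : ℝ) = (2:ℝ) ^ ((NT : ℝ)) := by
        rw [Real.rpow_natCast]; push_cast; ring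
      rw [this]
      calc Real.logb δ x = (2:ℝ) ^ (Real.logb 2 (Real.logb δ x)) :=
            (Real.rpow_logb two_pos (by norm_num) hA0pos).symm
        _ ≤ (2:ℝ) ^ ((NT : ℝ)) := Real.rpow_le_rpow_of_exponent_le one_le_two hNTr
    calc δ ^ (2 ^ NT) = δ ^ (((2 ^ NT : ℕ) : ℝ)) := by rw [Real.rpow_natCast]
      _ ≤ δ ^ (Real.logb δ x) := Real.rpow_le_rpow_of_exponent_ge hδ0 hδ1.le h2N
      _ = x := Real.rpow_logb hδ0 hδ1.ne hx0
  -- index arithmetic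
  have hkK : K + NT ≤ k := by
    rw [hKε] at hk
    have h1 : (K : ℤ) + N ≤ (k : ℤ) := by
      rw [hKdef]
      rw [Int.toNat_of_nonneg hkmax0]
      exact hk
    omega
  obtain ⟨-, h2⟩ := main k
  have hdk : dseq k = 2 * δ ^ (2 ^ (k - K)) := hdquad k (by omega)
  have hmono : δ ^ (2 ^ (k - K)) ≤ δ ^ (2 ^ NT) :=
    pow_le_pow_of_le_one hδ0.le hδ1.le (Nat.pow_le_pow_right (by norm_num) (by omega))
  have hfin : τ * (2 * x) = ε := by
    rw [hτ, hx]
    field_simp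
  calc linfNorm (P (u k)) ≤ τ * dseq k := h2
    _ = τ * (2 * δ ^ (2 ^ (k - K))) := by rw [hdk]
    _ ≤ τ * (2 * δ ^ (2 ^ NT)) := by gcongr
    _ ≤ τ * (2 * x) := by gcongr
    _ = ε := hfin
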